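/- Let M ∈ ℝ^{n×n} be symmetric positive definite, let W ∈ ℝ^{n×n} be a diagonal matrix with positive diagonal entries, let c > 0 be such that cW⁻¹ − M⁻¹ is positive semidefinite, let α > 0, let a ≤ b be reals and S = {z ∈ ℝ^n : a ≤ z_i ≤ b for all i}, and let p, μ⁰ ∈ ℝ^n. Define q = p + (cW⁻¹ − M⁻¹) μ⁰. Then μ̃ = (1/c) W (q − α Π_S(q/α)) is the unique minimizer over ℝ^n of the function μ ↦ δ*_S(μ) + (1/(2α))(μ − M p)ᵀ M⁻¹ (μ − M p) + (1/(2α))(μ − μ⁰)ᵀ (cW⁻¹ − M⁻¹)(μ − μ⁰). -/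

import Mathlib

open Matrix

/-- The support function `δ*_B(μ) = sup_{z ∈ B} ⟨μ, z⟩` of a set `B ⊆ ℝ^n`,
with values in `EReal`. -/
noncomputable def suppFn {n : ℕ} (B : Set (Fin n → ℝ)) (mu : Fin n → ℝ) : EReal :=
  ⨆ z : B, ((mu ⬝ᵥ (z : Fin n → ℝ) : ℝ) : EReal)

/-- The objective
`μ ↦ δ*_S(μ) + (1/(2α))(μ - Mp)ᵀ M⁻¹ (μ - Mp) + (1/(2α))(μ - μ⁰)ᵀ (cW⁻¹ - M⁻¹)(μ - μ⁰)`. -/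
noncomputable def objMu {n : ℕ} (M W : Matrix (Fin n) (Fin n) ℝ) (c α : ℝ)
    (S : Set (Fin n → ℝ)) (p mu0 mu : Fin n → ℝ) : EReal :=
  suppFn S mu +
    (((1 : ℝ)/(2*α) * ((mu - M *ᵥ p) ⬝ᵥ (M⁻¹ *ᵥ (mu - M *ᵥ p)))
      + (1 : ℝ)/(2*α) * ((mu - mu0) ⬝ᵥ ((c • W⁻¹ - M⁻¹) *ᵥ (mu - mu0))) : ℝ) : EReal)

/-- The real (quadratic) part of the objective. -/
noncomputable def Gfun {n : ℕ} (M W : Matrix (Fin n) (Fin n) ℝ) (c α : ℝ)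
    (p mu0 mu : Fin n → ℝ) : ℝ :=
  (1 : ℝ)/(2*α) * ((mu - M *ᵥ p) ⬝ᵥ (M⁻¹ *ᵥ (mu - M *ᵥ p)))
    + (1 : ℝ)/(2*α) * ((mu - mu0) ⬝ᵥ ((c • W⁻¹ - M⁻¹) *ᵥ (mu - mu0)))

lemma objMu_eq_Gfun {n : ℕ} (M W : Matrix (Fin n) (Fin n) ℝ) (c α : ℝ)
    (S : Set (Fin n → ℝ)) (p mu0 mu : Fin n → ℝ) :
    objMu M W c α S p mu0 mu = suppFn S mu + ((Gfun M W c α p mu0 mu : ℝ) : EReal) := rfl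

lemma symmDot {n : ℕ} (N : Matrix (Fin n) (Fin n) ℝ) (hN : Nᵀ = N) (x y : Fin n → ℝ) :
    x ⬝ᵥ N *ᵥ y = y ⬝ᵥ N *ᵥ x := by
  rw [dotProduct_mulVec, dotProduct_comm, ← mulVec_transpose, hN]

lemma expandQuad {n : ℕ} (N : Matrix (Fin n) (Fin n) ℝ) (hN : Nᵀ = N) (u d : Fin n → ℝ) :
    (u + d) ⬝ᵥ N *ᵥ (u + d) = u ⬝ᵥ N *ᵥ u + 2 * (d ⬝ᵥ N *ᵥ u) + d ⬝ᵥ N *ᵥ d := by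
  rw [mulVec_add, dotProduct_add, add_dotProduct, add_dotProduct, symmDot N hN u d]
  ring

lemma diag_inv {n : ℕ} (v : Fin n → ℝ) (hv : ∀ i, v i ≠ 0) :
    (Matrix.diagonal v)⁻¹ = Matrix.diagonal (fun i => (v i)⁻¹) := by
  apply Matrix.inv_eq_right_inv
  rw [Matrix.diagonal_mul_diagonal]
  have : (fun i => v i * (v i)⁻¹) = fun _ => (1:ℝ) := funext fun i => mul_inv_cancel₀ (hv i)
  rw [this, Matrix.diagonal_one]

/-- The μ-subproblem has the closed form solution `μ̃ = (1/c) W (q - α Π_S(q/α))`. -/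
theorem mu_subproblem_closed_form {n : ℕ}
    (M : Matrix (Fin n) (Fin n) ℝ) (hM : M.PosDef)
    (W : Matrix (Fin n) (Fin n) ℝ) (hWdiag : ∀ i j, i ≠ j → W i j = 0)
    (hWpos : ∀ i, 0 < W i i)
    (c : ℝ) (hc : 0 < c) (hcW : (c • W⁻¹ - M⁻¹).PosSemidef)
    (α : ℝ) (hα : 0 < α)
    (a b : ℝ) (hab : a ≤ b)
    (S : Set (Fin n → ℝ)) (hS : S = {z : Fin n → ℝ | ∀ i, a ≤ z i ∧ z i ≤ b})
    (p mu0 q : Fin n → ℝ)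
    (hq : q = p + (c • W⁻¹ - M⁻¹) *ᵥ mu0)
    -- `P = Π_S(q/α)`, the Euclidean projection of `q/α` onto `S`:
    (P : Fin n → ℝ) (hPmem : P ∈ S)
    (hPproj : ∀ z ∈ S, ((1/α) • q - P) ⬝ᵥ ((1/α) • q - P) ≤ ((1/α) • q - z) ⬝ᵥ ((1/α) • q - z))
    (muTil : Fin n → ℝ) (hmut : muTil = (1/c) • (W *ᵥ (q - α • P))) :
    (∀ mu : Fin n → ℝ, objMu M W c α S p mu0 muTil ≤ objMu M W c α S p mu0 mu) ∧
    (∀ mu : Fin n → ℝ, (∀ mu' : Fin n → ℝ, objMu M W c α S p mu0 mu ≤ objMu M W c α S p mu0 mu')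
      → mu = muTil) := by
  have hPmem' : ∀ i, a ≤ P i ∧ P i ≤ b := by
    have h := hPmem; rw [hS] at h; exact h
  -- W is the diagonal matrix of its diagonal entries
  have hWd : W = Matrix.diagonal (fun i => W i i) := by
    ext j k
    by_cases h : j = k
    · subst h; simp
    · simp [Matrix.diagonal, h, hWdiag j k h]
  have hWinvd : W⁻¹ = Matrix.diagonal (fun i => (W i i)⁻¹) := by
    conv_lhs => rw [hWd]
    exact diag_inv _ (fun i => (hWpos i).ne')
  have hWinvW : W⁻¹ * W = 1 := by
    rw [hWinvd]
    nth_rewrite 2 [hWd]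
    rw [Matrix.diagonal_mul_diagonal]
    have : (fun i => (W i i)⁻¹ * W i i) = fun _ => (1:ℝ) :=
      funext fun i => inv_mul_cancel₀ (hWpos i).ne'
    rw [this, Matrix.diagonal_one]
  -- symmetry facts
  have hMinvT : (M⁻¹)ᵀ = M⁻¹ := by
    rw [Matrix.transpose_nonsing_inv]; congr 1; simpa using hM.1.eq
  have hcWT : (c • W⁻¹)ᵀ = c • W⁻¹ := by
    rw [Matrix.transpose_smul, hWinvd, Matrix.diagonal_transpose]
  have hAT : (c • W⁻¹ - M⁻¹)ᵀ = c • W⁻¹ - M⁻¹ := by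
    rw [Matrix.transpose_sub, hcWT, hMinvT]
  -- coordinates of muTil
  have hmuti : ∀ i, muTil i = 1/c * (W i i * (q i - α * P i)) := by
    intro i
    have h1 : (W *ᵥ (q - α • P)) i = W i i * (q i - α * P i) := by
      nth_rewrite 1 [hWd]
      rw [Matrix.mulVec_diagonal]
      simp
    rw [hmut, Pi.smul_apply, h1, smul_eq_mul]
  -- P is the coordinatewise clamp of (1/α) q to [a,b]
  have hclamp : ∀ i, P i = max a (min b (1/α * q i)) := by
    intro i
    set xi := 1/α * q i with hxi
    set t := max a (min b xi) with hti
    have hta : a ≤ t := le_max_left _ _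
    have htb : t ≤ b := max_le hab (min_le_left _ _)
    have hzS : Function.update P i t ∈ S := by
      rw [hS]
      intro j
      by_cases h : j = i
      · subst h; simpa using ⟨hta, htb⟩
      · simpa [Function.update_of_ne h] using hPmem' j
    have h := hPproj _ hzS
    simp only [dotProduct] at h
    rw [← Finset.sum_erase_add _ _ (Finset.mem_univ i),
      ← Finset.sum_erase_add _ _ (Finset.mem_univ i)] at h
    have hsame : ∀ j ∈ Finset.univ.erase i,
        (((1/α) • q - P) j * ((1/α) • q - P) j)
          = (((1/α) • q - Function.update P i t) j
              * (((1/α) • q - Function.update P i t) j)) := by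
      intro j hj
      have hne : j ≠ i := Finset.ne_of_mem_erase hj
      simp [Function.update_of_ne hne]
    rw [Finset.sum_congr rfl hsame] at h
    have h2 := le_of_add_le_add_left h
    simp only [Pi.sub_apply, Pi.smul_apply, smul_eq_mul, Function.update_self] at h2
    have hpa := (hPmem' i).1
    have hpb := (hPmem' i).2
    rcases le_total xi a with h1 | h1
    · have ht' : t = a := by rw [hti, min_eq_right (h1.trans hab), max_eq_left h1]
      rw [ht'] at h2 ⊢
      have hle : P i ≤ a := by nlinarith
      exact le_antisymm hle hpa
    rcases le_total b xi with h3 | h3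
    · have ht' : t = b := by rw [hti, min_eq_left h3, max_eq_right hab]
      rw [ht'] at h2 ⊢
      have hle : b ≤ P i := by nlinarith
      exact le_antisymm hpb hle
    · have ht' : t = xi := by rw [hti, min_eq_right h3, max_eq_right h1]
      rw [ht'] at h2 ⊢
      nlinarith
  -- key variational inequality per coordinate
  have hkey : ∀ i, ∀ t, a ≤ t → t ≤ b → (q i - α * P i) * (t - P i) ≤ 0 := by
    intro i t h1 h2
    have hx : q i - α * P i = α * (1/α * q i - P i) := by
      field_simp
    rw [hx, mul_assoc]
    refine mul_nonpos_iff.2 (Or.inl ⟨hα.le, ?_⟩)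
    have hcl := hclamp i
    rcases le_total (1/α * q i) a with hxa | hxa
    · have hPa : P i = a := by rw [hcl, min_eq_right (hxa.trans hab), max_eq_left hxa]
      rw [hPa]
      exact mul_nonpos_iff.2 (Or.inr ⟨by linarith, by linarith⟩)
    rcases le_total b (1/α * q i) with hxb | hxb
    · have hPb : P i = b := by rw [hcl, min_eq_left hxb, max_eq_right hab]
      rw [hPb]
      exact mul_nonpos_iff.2 (Or.inl ⟨by linarith, by linarith⟩)
    · have hPx : P i = 1/α * q i := by rw [hcl, min_eq_right hxb, max_eq_right hxa]
      rw [hPx]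
      simp
  -- the sup over S of ⟨muTil, ·⟩ is attained at P
  have hsupmax : ∀ z ∈ S, muTil ⬝ᵥ z ≤ muTil ⬝ᵥ P := by
    intro z hz
    rw [hS] at hz
    rw [← sub_nonpos, ← dotProduct_sub]
    have : muTil ⬝ᵥ (z - P) = ∑ i, muTil i * (z - P) i := rfl
    rw [this]
    apply Finset.sum_nonpos
    intro i _
    have h1 := hkey i (z i) (hz i).1 (hz i).2
    have h2 : (0:ℝ) ≤ 1/c * W i i := by
      have := hWpos i
      positivity
    calc muTil i * (z - P) i
        = (1/c * W i i) * ((q i - α * P i) * (z i - P i)) := by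
          rw [hmuti i, Pi.sub_apply]; ring
      _ ≤ 0 := mul_nonpos_iff.2 (Or.inl ⟨h2, h1⟩)
  -- matrix algebra
  have hMinvM : M⁻¹ *ᵥ (M *ᵥ p) = p := by
    rw [mulVec_mulVec, Matrix.nonsing_inv_mul M hM.det_pos.ne'.isUnit, one_mulVec]
  have hcWmuTil : (c • W⁻¹) *ᵥ muTil = q - α • P := by
    rw [hmut, Matrix.smul_mulVec, mulVec_smul, smul_smul,
      mul_one_div_cancel hc.ne', one_smul, mulVec_mulVec, hWinvW, one_mulVec]
  have hAmu0 : (c • W⁻¹ - M⁻¹) *ᵥ mu0 = q - p := by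
    rw [hq, add_sub_cancel_left]
  have hcrossvec : M⁻¹ *ᵥ (muTil - M *ᵥ p) + (c • W⁻¹ - M⁻¹) *ᵥ (muTil - mu0)
      = -(α • P) := by
    rw [mulVec_sub, mulVec_sub, hMinvM, hAmu0]
    have h1 : M⁻¹ *ᵥ muTil + (c • W⁻¹ - M⁻¹) *ᵥ muTil = q - α • P := by
      rw [← Matrix.add_mulVec, add_sub_cancel, hcWmuTil]
    funext i
    have h2 := congrFun h1 i
    simp only [Pi.add_apply, Pi.sub_apply, Pi.neg_apply, Pi.smul_apply, smul_eq_mul] at h2 ⊢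
    linarith
  -- the quadratic expansion identity
  have hGid : ∀ mu, Gfun M W c α p mu0 mu
      = Gfun M W c α p mu0 muTil + (-(P ⬝ᵥ (mu - muTil)))
        + 1/(2*α) * ((mu - muTil) ⬝ᵥ (c • W⁻¹) *ᵥ (mu - muTil)) := by
    intro mu
    have hd1 : mu - M *ᵥ p = (muTil - M *ᵥ p) + (mu - muTil) := by ring
    have hd2 : mu - mu0 = (muTil - mu0) + (mu - muTil) := by ring
    have hc1 : (mu - muTil) ⬝ᵥ M⁻¹ *ᵥ (muTil - M *ᵥ p)
        + (mu - muTil) ⬝ᵥ (c • W⁻¹ - M⁻¹) *ᵥ (muTil - mu0)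
        = -(α * (P ⬝ᵥ (mu - muTil))) := by
      rw [← dotProduct_add, hcrossvec, dotProduct_neg, dotProduct_smul, smul_eq_mul,
        dotProduct_comm]
    have hc2 : (mu - muTil) ⬝ᵥ M⁻¹ *ᵥ (mu - muTil)
        + (mu - muTil) ⬝ᵥ (c • W⁻¹ - M⁻¹) *ᵥ (mu - muTil)
        = (mu - muTil) ⬝ᵥ (c • W⁻¹) *ᵥ (mu - muTil) := by
      rw [← dotProduct_add, ← Matrix.add_mulVec, add_sub_cancel]
    have hk : 1/(2*α) * (2*α) = 1 := by field_simp
    unfold Gfun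
    rw [hd1, hd2, expandQuad _ hMinvT, expandQuad _ hAT]
    have hαinv : α * α⁻¹ = 1 := mul_inv_cancel₀ hα.ne'
    linear_combination (2/(2*α)) * hc1 + (1/(2*α)) * hc2 + (P ⬝ᵥ (mu - muTil)) * hk
      - (2*(P ⬝ᵥ (mu - muTil))) * hαinv
  -- quadratic form representation
  have hrepr : ∀ d : Fin n → ℝ,
      d ⬝ᵥ (c • W⁻¹) *ᵥ d = ∑ i, c * (W i i)⁻¹ * (d i)^2 := by
    intro d
    rw [hWinvd, Matrix.smul_mulVec]
    simp only [dotProduct, Pi.smul_apply, Matrix.mulVec_diagonal, smul_eq_mul]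
    exact Finset.sum_congr rfl fun i _ => by ring
  -- suppFn facts
  have hsupP : ∀ mu : Fin n → ℝ, ((mu ⬝ᵥ P : ℝ) : EReal) ≤ suppFn S mu := by
    intro mu
    exact le_iSup (fun z : S => ((mu ⬝ᵥ (z : Fin n → ℝ) : ℝ) : EReal)) ⟨P, hPmem⟩
  have hsupTil : suppFn S muTil = ((muTil ⬝ᵥ P : ℝ) : EReal) := by
    refine le_antisymm (iSup_le fun z => ?_) (hsupP muTil)
    exact EReal.coe_le_coe_iff.2 (hsupmax z z.2)
  have hobjTil : objMu M W c α S p mu0 muTil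
      = ((muTil ⬝ᵥ P + Gfun M W c α p mu0 muTil : ℝ) : EReal) := by
    rw [objMu_eq_Gfun, hsupTil, ← EReal.coe_add]
  have hlow : ∀ mu : Fin n → ℝ,
      ((mu ⬝ᵥ P + Gfun M W c α p mu0 mu : ℝ) : EReal) ≤ objMu M W c α S p mu0 mu := by
    intro mu
    rw [objMu_eq_Gfun, EReal.coe_add]
    exact add_le_add_left (hsupP mu) _
  have hRle : ∀ mu : Fin n → ℝ,
      muTil ⬝ᵥ P + Gfun M W c α p mu0 muTil
          + 1/(2*α) * ((mu - muTil) ⬝ᵥ (c • W⁻¹) *ᵥ (mu - muTil))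
        = mu ⬝ᵥ P + Gfun M W c α p mu0 mu := by
    intro mu
    have hdot : P ⬝ᵥ (mu - muTil) = mu ⬝ᵥ P - muTil ⬝ᵥ P := by
      rw [dotProduct_sub, dotProduct_comm P mu, dotProduct_comm P muTil]
    rw [hGid mu]
    linarith [hdot]
  have hqnn : ∀ d : Fin n → ℝ, 0 ≤ 1/(2*α) * (d ⬝ᵥ (c • W⁻¹) *ᵥ d) := by
    intro d
    rw [hrepr d]
    apply mul_nonneg (by positivity)
    apply Finset.sum_nonneg
    intro i _
    have := hWpos i
    positivity
  constructor
  · intro mu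
    calc objMu M W c α S p mu0 muTil
        = ((muTil ⬝ᵥ P + Gfun M W c α p mu0 muTil : ℝ) : EReal) := hobjTil
      _ ≤ ((mu ⬝ᵥ P + Gfun M W c α p mu0 mu : ℝ) : EReal) := by
          refine EReal.coe_le_coe_iff.2 ?_
          have h1 := hRle mu
          have h2 := hqnn (mu - muTil)
          linarith
      _ ≤ objMu M W c α S p mu0 mu := hlow mu
  · intro mu hmin
    have h1 := hmin muTil
    rw [hobjTil] at h1
    have h3 := EReal.coe_le_coe_iff.1 (le_trans (hlow mu) h1)
    have h4 : 1/(2*α) * ((mu - muTil) ⬝ᵥ (c • W⁻¹) *ᵥ (mu - muTil)) ≤ 0 := by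
      have := hRle mu
      linarith
    have h2α : (0:ℝ) < 1/(2*α) := by positivity
    have h5 : (mu - muTil) ⬝ᵥ (c • W⁻¹) *ᵥ (mu - muTil) ≤ 0 := by nlinarith
    have h6 : ∀ i, mu i - muTil i = 0 := by
      by_contra hcon
      push_neg at hcon
      obtain ⟨i, hi⟩ := hcon
      have h7 : (0:ℝ) < c * (W i i)⁻¹ := by
        have := hWpos i
        positivity
      have h8 : (0:ℝ) < (mu i - muTil i)^2 := by
        rcases lt_or_gt_of_ne hi with h | h <;> nlinarith
      have hterm : (0:ℝ) < c * (W i i)⁻¹ * ((mu - muTil) i)^2 := by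
        have : ((mu - muTil) i) = mu i - muTil i := rfl
        rw [this]
        exact mul_pos h7 h8
      have hnn : ∀ j ∈ Finset.univ, (0:ℝ) ≤ c * (W j j)⁻¹ * ((mu - muTil) j)^2 := by
        intro j _
        have := hWpos j
        positivity
      have hsum : (0:ℝ) < ∑ j, c * (W j j)⁻¹ * ((mu - muTil) j)^2 :=
        lt_of_lt_of_le hterm (Finset.single_le_sum hnn (Finset.mem_univ i))
      rw [hrepr] at h5
      linarith
    funext i
    have := h6 i
    linarith
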